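/- Let M_j = P_{Y_j|Xⁿ}, j = 1,…,k, be mechanisms on finite alphabets such that M_j satisfies ε_j-MI-DP for each j, and suppose the outputs Y₁,…,Y_k are conditionally independent given Xⁿ (i.e. the joint kernel factorizes as P_{Y₁,…,Y_k|Xⁿ} = ∏_j P_{Y_j|Xⁿ}). Then the combined mechanism P_{Y₁,…,Y_k|Xⁿ} satisfies (∑_{j=1}^k ε_j)-MI-DP: for every joint pmf P_{Xⁿ} and every index i, I(X_i; Y₁,…,Y_k | X^{−i}) ≤ ∑_{j=1}^k ε_j nats. -/

import Mathlib

open Real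
open scoped BigOperators

/-- Two datasets are neighbors if they differ in exactly one coordinate. -/
def Neighbor {n : ℕ} {𝒳 : Fin n → Type*} (x x' : ∀ i, 𝒳 i) : Prop :=
  ∃ i, x i ≠ x' i ∧ ∀ j, j ≠ i → x j = x' j

/-- The conditional mutual information `I(X_i; Y | X^{−i})` (in nats) of the joint
distribution of `(Xⁿ, Y)` induced by a prior pmf `μ` on datasets and a mechanism
(channel) `Q = P_{Y|Xⁿ}`; here `X^{−i}` denotes all dataset coordinates except the
`i`-th.  The inner logarithm is `log (P(y|x) / P(y | x^{−i}))`. -/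
noncomputable def condMI {n : ℕ} {𝒳 : Fin n → Type*} [∀ i, Fintype (𝒳 i)]
    {𝒴 : Type*} [Fintype 𝒴]
    (μ : (∀ i, 𝒳 i) → ℝ) (Q : (∀ i, 𝒳 i) → 𝒴 → ℝ) (i : Fin n) : ℝ :=
  ∑ x, ∑ y, μ x * Q x y *
    log ((Q x y * ∑ a, μ (Function.update x i a)) /
      (∑ a, μ (Function.update x i a) * Q (Function.update x i a) y))


section Helpers

lemma sum_pi_prod {k : ℕ} {𝒴 : Fin k → Type*} [∀ j, Fintype (𝒴 j)]
    (h : ∀ j, 𝒴 j → ℝ) :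
    ∑ y : ∀ j, 𝒴 j, ∏ j, h j (y j) = ∏ j, ∑ b, h j b := by
  classical
  rw [Finset.prod_univ_sum, Fintype.piFinset_univ]

lemma sum_pi_prod_single {k : ℕ} {𝒴 : Fin k → Type*} [∀ j, Fintype (𝒴 j)]
    (Q : ∀ l, 𝒴 l → ℝ) (hQ1 : ∀ l, ∑ b, Q l b = 1) (j : Fin k) (g : 𝒴 j → ℝ) :
    ∑ y : ∀ l, 𝒴 l, (∏ l, Q l (y l)) * g (y j) = ∑ b, Q j b * g b := by
  classical
  have key : ∀ y : ∀ l, 𝒴 l, (∏ l, Q l (y l)) * g (y j)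
      = ∏ l, Function.update Q j (fun b => Q j b * g b) l (y l) := by
    intro y
    have h1 : (fun l => Function.update Q j (fun b => Q j b * g b) l (y l))
        = Function.update (fun l => Q l (y l)) j (Q j (y j) * g (y j)) := by
      funext l
      rcases eq_or_ne l j with rfl | hl
      · simp
      · simp [Function.update_of_ne hl]
    rw [h1, Finset.prod_update_of_mem (Finset.mem_univ j)]
    rw [Finset.sdiff_singleton_eq_erase,
      ← Finset.mul_prod_erase Finset.univ (fun l => Q l (y l)) (Finset.mem_univ j)]
    ring
  rw [Finset.sum_congr rfl (fun y _ => key y), sum_pi_prod]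
  have h2 : (fun l => ∑ b, Function.update Q j (fun b => Q j b * g b) l b)
      = Function.update (fun l => ∑ b, Q l b) j (∑ b, Q j b * g b) := by
    funext l
    rcases eq_or_ne l j with rfl | hl
    · simp
    · simp [Function.update_of_ne hl]
  calc ∏ l, ∑ b, Function.update Q j (fun b => Q j b * g b) l b
      = ∏ l, Function.update (fun l => ∑ b, Q l b) j (∑ b, Q j b * g b) l :=
        Finset.prod_congr rfl fun l _ => congrFun h2 l
    _ = (∑ b, Q j b * g b) * ∏ l ∈ Finset.univ \ {j}, ∑ b, Q l b := by
        rw [Finset.prod_update_of_mem (Finset.mem_univ j)]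
    _ = ∑ b, Q j b * g b := by
        rw [Finset.prod_congr rfl (fun l _ => hQ1 l), Finset.prod_const_one, mul_one]

lemma sum_sum_update {n : ℕ} {𝒳 : Fin n → Type*} [∀ i, Fintype (𝒳 i)] (i : Fin n)
    (F : (∀ j, 𝒳 j) → 𝒳 i → ℝ) :
    ∑ x, ∑ a, F (Function.update x i a) (x i) = ∑ x, ∑ a, F x a := by
  classical
  have h1 := Fintype.sum_prod_type
    (f := fun p : (∀ j, 𝒳 j) × 𝒳 i => F (Function.update p.1 i p.2) (p.1 i))
  have h2 := Fintype.sum_prod_type (f := fun p : (∀ j, 𝒳 j) × 𝒳 i => F p.1 p.2)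
  rw [← h1, ← h2]
  exact Fintype.sum_bijective
    (fun p : (∀ j, 𝒳 j) × 𝒳 i => (Function.update p.1 i p.2, p.1 i))
    (Function.Involutive.bijective (fun p => by simp [Function.update_idem]))
    _ _ (fun p => rfl)

end Helpers

section Aux
variable {n : ℕ} {𝒳 : Fin n → Type*} [∀ i, Fintype (𝒳 i)]

noncomputable def nuF (μ : (∀ i, 𝒳 i) → ℝ) (i : Fin n) (x : ∀ i, 𝒳 i) : ℝ :=
  ∑ a, μ (Function.update x i a)

noncomputable def DF (μ : (∀ i, 𝒳 i) → ℝ) (i : Fin n) {𝒴 : Type*} [Fintype 𝒴]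
    (Q : (∀ i, 𝒳 i) → 𝒴 → ℝ) (x : ∀ i, 𝒳 i) (y : 𝒴) : ℝ :=
  ∑ a, μ (Function.update x i a) * Q (Function.update x i a) y

lemma condMI_eq (μ : (∀ i, 𝒳 i) → ℝ) {𝒴 : Type*} [Fintype 𝒴]
    (Q : (∀ i, 𝒳 i) → 𝒴 → ℝ) (i : Fin n) :
    condMI μ Q i = ∑ x, ∑ y, μ x * Q x y * log ((Q x y * nuF μ i x) / DF μ i Q x y) := rfl

variable (μ : (∀ i, 𝒳 i) → ℝ) (i : Fin n)

lemma nuF_update (x : ∀ i, 𝒳 i) (a : 𝒳 i) : nuF μ i (Function.update x i a) = nuF μ i x := by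
  unfold nuF
  exact Finset.sum_congr rfl fun b _ => by rw [Function.update_idem]

lemma DF_update {𝒴 : Type*} [Fintype 𝒴] (Q : (∀ i, 𝒳 i) → 𝒴 → ℝ)
    (x : ∀ i, 𝒳 i) (a : 𝒳 i) (y : 𝒴) :
    DF μ i Q (Function.update x i a) y = DF μ i Q x y := by
  unfold DF
  exact Finset.sum_congr rfl fun b _ => by rw [Function.update_idem]

lemma le_nuF (hμ0 : ∀ x, 0 ≤ μ x) (x : ∀ i, 𝒳 i) : μ x ≤ nuF μ i x := by
  have h := Finset.single_le_sum (f := fun a => μ (Function.update x i a))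
    (fun a _ => hμ0 _) (Finset.mem_univ (x i))
  simpa [nuF, Function.update_eq_self] using h

lemma nuF_nonneg (hμ0 : ∀ x, 0 ≤ μ x) (x : ∀ i, 𝒳 i) : 0 ≤ nuF μ i x :=
  Finset.sum_nonneg fun a _ => hμ0 _

lemma le_DF {𝒴 : Type*} [Fintype 𝒴] (Q : (∀ i, 𝒳 i) → 𝒴 → ℝ)
    (hμ0 : ∀ x, 0 ≤ μ x) (hQ0 : ∀ x y, 0 ≤ Q x y) (x : ∀ i, 𝒳 i) (y : 𝒴) :
    μ x * Q x y ≤ DF μ i Q x y := by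
  have h := Finset.single_le_sum
    (f := fun a => μ (Function.update x i a) * Q (Function.update x i a) y)
    (fun a _ => mul_nonneg (hμ0 _) (hQ0 _ _)) (Finset.mem_univ (x i))
  simpa [DF, Function.update_eq_self] using h

lemma DF_nonneg {𝒴 : Type*} [Fintype 𝒴] (Q : (∀ i, 𝒳 i) → 𝒴 → ℝ)
    (hμ0 : ∀ x, 0 ≤ μ x) (hQ0 : ∀ x y, 0 ≤ Q x y) (x : ∀ i, 𝒳 i) (y : 𝒴) :
    0 ≤ DF μ i Q x y :=
  Finset.sum_nonneg fun a _ => mul_nonneg (hμ0 _) (hQ0 _ _)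

lemma DF_marginal {𝒴 : Type*} [Fintype 𝒴] (Q : (∀ i, 𝒳 i) → 𝒴 → ℝ)
    (hQ1 : ∀ x, ∑ y, Q x y = 1) (x : ∀ i, 𝒳 i) :
    ∑ y, DF μ i Q x y = nuF μ i x := by
  unfold DF nuF
  rw [Finset.sum_comm]
  exact Finset.sum_congr rfl fun a _ => by rw [← Finset.mul_sum, hQ1, mul_one]

end Aux

set_option maxHeartbeats 1000000 in
lemma condMI_prod_le {n k : ℕ} {𝒳 : Fin n → Type*} [∀ i, Fintype (𝒳 i)]
    {𝒴 : Fin k → Type*} [∀ j, Fintype (𝒴 j)]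
    (Q : ∀ j : Fin k, (∀ i, 𝒳 i) → 𝒴 j → ℝ)
    (hQ0 : ∀ j x y, 0 ≤ Q j x y) (hQ1 : ∀ j x, ∑ y, Q j x y = 1)
    (μ : (∀ i, 𝒳 i) → ℝ) (hμ0 : ∀ x, 0 ≤ μ x) (hμ1 : ∑ x, μ x = 1) (i : Fin n) :
    condMI μ (fun x (y : ∀ j, 𝒴 j) => ∏ j, Q j x (y j)) i ≤ ∑ j, condMI μ (Q j) i := by
  classical
  set P : (∀ i, 𝒳 i) → (∀ j, 𝒴 j) → ℝ := fun x y => ∏ j, Q j x (y j) with hPdef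
  set C : (∀ i, 𝒳 i) → (∀ j, 𝒴 j) → ℝ := fun x y =>
    (∏ j, DF μ i (Q j) x (y j)) * nuF μ i x / (nuF μ i x ^ k * DF μ i P x y) with hCdef
  -- basic positivity / nonnegativity facts
  have hν0 : ∀ x, 0 ≤ nuF μ i x := nuF_nonneg μ i hμ0
  have hμν : ∀ x, μ x ≤ nuF μ i x := le_nuF μ i hμ0
  have hνz : ∀ x, nuF μ i x = 0 → μ x = 0 := fun x h =>
    le_antisymm (h ▸ hμν x) (hμ0 x)
  have hP0 : ∀ x y, 0 ≤ P x y := fun x y => Finset.prod_nonneg fun j _ => hQ0 j x (y j)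
  have hP1 : ∀ x, ∑ y, P x y = 1 := by
    intro x
    simp only [hPdef]
    rw [sum_pi_prod (fun j => Q j x)]
    exact Finset.prod_eq_one fun j _ => hQ1 j x
  have hCup : ∀ x a y, C (Function.update x i a) y = C x y := by
    intro x a y
    simp only [hCdef]
    rw [nuF_update, DF_update,
      Finset.prod_congr rfl (fun j _ => DF_update μ i (Q j) x a (y j))]
  have hsum_prodD : ∀ x, ∑ y : ∀ j, 𝒴 j, ∏ j, DF μ i (Q j) x (y j) = nuF μ i x ^ k := by
    intro x
    rw [sum_pi_prod (fun j => DF μ i (Q j) x)]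
    rw [Finset.prod_congr rfl (fun j _ => DF_marginal μ i (Q j) (hQ1 j) x)]
    rw [Finset.prod_const, Finset.card_univ, Fintype.card_fin]
  -- Step A: pointwise log inequality
  have hA : ∀ (x : ∀ i, 𝒳 i) (y : ∀ j, 𝒴 j), μ x * P x y * log (P x y * nuF μ i x / DF μ i P x y)
      ≤ μ x * P x y * (∑ j, log (Q j x (y j) * nuF μ i x / DF μ i (Q j) x (y j)))
        + (μ x * P x y * C x y - μ x * P x y) := by
    intro x y
    by_cases hp : μ x * P x y = 0
    · rw [hp]; simp
    · have hμpos : 0 < μ x :=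
        lt_of_le_of_ne (hμ0 x) (Ne.symm (mul_ne_zero_iff.mp hp).1)
      have hPne : P x y ≠ 0 := (mul_ne_zero_iff.mp hp).2
      have hQpos : ∀ j, 0 < Q j x (y j) := fun j =>
        lt_of_le_of_ne (hQ0 j x (y j)) fun h =>
          hPne (Finset.prod_eq_zero (Finset.mem_univ j) h.symm)
      have hPpos : 0 < P x y := Finset.prod_pos fun j _ => hQpos j
      have hνpos : 0 < nuF μ i x := lt_of_lt_of_le hμpos (hμν x)
      have hDpos : ∀ j, 0 < DF μ i (Q j) x (y j) := fun j =>
        lt_of_lt_of_le (mul_pos hμpos (hQpos j)) (le_DF μ i (Q j) hμ0 (hQ0 j) x (y j))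
      have hDppos : 0 < DF μ i P x y :=
        lt_of_lt_of_le (mul_pos hμpos hPpos) (le_DF μ i P hμ0 hP0 x y)
      have hprodDpos : 0 < ∏ j, DF μ i (Q j) x (y j) := Finset.prod_pos fun j _ => hDpos j
      have hCpos : 0 < C x y := by
        simp only [hCdef]
        exact div_pos (mul_pos hprodDpos hνpos) (mul_pos (pow_pos hνpos k) hDppos)
      have hsumlog : ∑ j, log (Q j x (y j) * nuF μ i x / DF μ i (Q j) x (y j))
          = (∑ j, log (Q j x (y j))) + (k : ℝ) * log (nuF μ i x)
            - ∑ j, log (DF μ i (Q j) x (y j)) := by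
        rw [Finset.sum_congr rfl (fun j _ => by
          rw [Real.log_div (mul_ne_zero (hQpos j).ne' hνpos.ne') (hDpos j).ne',
            Real.log_mul (hQpos j).ne' hνpos.ne'])]
        rw [Finset.sum_sub_distrib, Finset.sum_add_distrib, Finset.sum_const,
          Finset.card_univ, Fintype.card_fin, nsmul_eq_mul]
      have hlogP : log (P x y) = ∑ j, log (Q j x (y j)) := by
        simp only [hPdef]
        exact Real.log_prod fun j _ => (hQpos j).ne'
      have hlogC : log (C x y) = (∑ j, log (DF μ i (Q j) x (y j))) + log (nuF μ i x)
          - ((k : ℝ) * log (nuF μ i x) + log (DF μ i P x y)) := by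
        simp only [hCdef]
        rw [Real.log_div (mul_ne_zero hprodDpos.ne' hνpos.ne')
            (mul_pos (pow_pos hνpos k) hDppos).ne',
          Real.log_mul hprodDpos.ne' hνpos.ne',
          Real.log_mul (pow_pos hνpos k).ne' hDppos.ne',
          Real.log_prod (fun j _ => (hDpos j).ne'), Real.log_pow]
        try push_cast
        try ring
      have hid : log (P x y * nuF μ i x / DF μ i P x y)
          = (∑ j, log (Q j x (y j) * nuF μ i x / DF μ i (Q j) x (y j))) + log (C x y) := by
        rw [Real.log_div (mul_ne_zero hPpos.ne' hνpos.ne') hDppos.ne',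
          Real.log_mul hPpos.ne' hνpos.ne', hlogP, hsumlog, hlogC]
        ring
      rw [hid]
      have hlc : log (C x y) ≤ C x y - 1 := Real.log_le_sub_one_of_pos hCpos
      have hmp : 0 ≤ μ x * P x y := le_of_lt (mul_pos hμpos hPpos)
      nlinarith [mul_le_mul_of_nonneg_left hlc hmp]
  -- Step B: the cross-entropy sum equals the sum of individual condMIs
  have hB : ∑ x, ∑ y, μ x * P x y *
        (∑ j, log (Q j x (y j) * nuF μ i x / DF μ i (Q j) x (y j)))
      = ∑ j, condMI μ (Q j) i := by
    have hx : ∀ x, ∑ y, μ x * P x y *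
          (∑ j, log (Q j x (y j) * nuF μ i x / DF μ i (Q j) x (y j)))
        = ∑ j, ∑ b, μ x * Q j x b * log (Q j x b * nuF μ i x / DF μ i (Q j) x b) := by
      intro x
      calc ∑ y, μ x * P x y * (∑ j, log (Q j x (y j) * nuF μ i x / DF μ i (Q j) x (y j)))
          = ∑ y, ∑ j, μ x * (P x y * log (Q j x (y j) * nuF μ i x / DF μ i (Q j) x (y j))) := by
            refine Finset.sum_congr rfl fun y _ => ?_
            rw [Finset.mul_sum]
            exact Finset.sum_congr rfl fun j _ => by ring
        _ = ∑ j, ∑ y, μ x * (P x y * log (Q j x (y j) * nuF μ i x / DF μ i (Q j) x (y j))) :=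
            Finset.sum_comm
        _ = ∑ j, μ x * ∑ y, P x y * log (Q j x (y j) * nuF μ i x / DF μ i (Q j) x (y j)) := by
            exact Finset.sum_congr rfl fun j _ => (Finset.mul_sum _ _ _).symm
        _ = ∑ j, μ x * ∑ b, Q j x b * log (Q j x b * nuF μ i x / DF μ i (Q j) x b) := by
            refine Finset.sum_congr rfl fun j _ => ?_
            simp only [hPdef]
            rw [sum_pi_prod_single (fun l => Q l x) (fun l => hQ1 l x) j
              (fun b => log (Q j x b * nuF μ i x / DF μ i (Q j) x b))]
        _ = ∑ j, ∑ b, μ x * Q j x b * log (Q j x b * nuF μ i x / DF μ i (Q j) x b) := by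
            refine Finset.sum_congr rfl fun j _ => ?_
            rw [Finset.mul_sum]
            exact Finset.sum_congr rfl fun b _ => by ring
    rw [Finset.sum_congr rfl fun x _ => hx x, Finset.sum_comm]
    exact Finset.sum_congr rfl fun j _ => (condMI_eq μ (Q j) i).symm
  -- Step C: total mass is one
  have hT : ∑ x, ∑ y, μ x * P x y = 1 := by
    rw [Finset.sum_congr rfl fun x _ => by rw [← Finset.mul_sum, hP1 x, mul_one]]
    exact hμ1
  -- Step D: the correction sum is at most one
  have hcol : ∀ (y : ∀ j, 𝒴 j), ∑ x, μ x * P x y * C x y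
      = ∑ x, (μ x / nuF μ i x) * DF μ i P x y * C x y := by
    intro y
    have hR : ∀ x, (μ x / nuF μ i x) * DF μ i P x y * C x y
        = ∑ a, (μ x / nuF μ i x) *
            (μ (Function.update x i a) * P (Function.update x i a) y) * C x y := by
      intro x
      have : DF μ i P x y = ∑ a, μ (Function.update x i a) * P (Function.update x i a) y := rfl
      rw [this, Finset.mul_sum, Finset.sum_mul]
    have hswap := sum_sum_update i (fun x a => (μ x / nuF μ i x) *
      (μ (Function.update x i a) * P (Function.update x i a) y) * C x y)
    have hL : ∀ x a, (μ (Function.update x i a) / nuF μ i x) * (μ x * P x y) * C x y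
        = (fun x a => (μ x / nuF μ i x) *
            (μ (Function.update x i a) * P (Function.update x i a) y) * C x y)
          (Function.update x i a) (x i) := by
      intro x a
      show (μ (Function.update x i a) / nuF μ i x) * (μ x * P x y) * C x y
          = (μ (Function.update x i a) / nuF μ i (Function.update x i a)) *
            (μ (Function.update (Function.update x i a) i (x i)) *
              P (Function.update (Function.update x i a) i (x i)) y) *
            C (Function.update x i a) y
      rw [nuF_update, hCup, Function.update_idem, Function.update_eq_self]
    calc ∑ x, μ x * P x y * C x y
        = ∑ x, (nuF μ i x / nuF μ i x) * (μ x * P x y * C x y) := by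
          refine Finset.sum_congr rfl fun x _ => ?_
          by_cases hν : nuF μ i x = 0
          · rw [hνz x hν]; simp
          · rw [div_self hν, one_mul]
      _ = ∑ x, ∑ a, (μ (Function.update x i a) / nuF μ i x) * (μ x * P x y) * C x y := by
          refine Finset.sum_congr rfl fun x _ => ?_
          rw [show nuF μ i x / nuF μ i x * (μ x * P x y * C x y)
              = (∑ a, μ (Function.update x i a)) / nuF μ i x * (μ x * P x y) * C x y by
            rw [show (∑ a, μ (Function.update x i a)) = nuF μ i x from rfl]; ring]
          rw [Finset.sum_div, Finset.sum_mul, Finset.sum_mul]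
      _ = ∑ x, ∑ a, (fun x a => (μ x / nuF μ i x) *
            (μ (Function.update x i a) * P (Function.update x i a) y) * C x y)
            (Function.update x i a) (x i) := by
          exact Finset.sum_congr rfl fun x _ => Finset.sum_congr rfl fun a _ => hL x a
      _ = ∑ x, ∑ a, (μ x / nuF μ i x) *
            (μ (Function.update x i a) * P (Function.update x i a) y) * C x y := hswap
      _ = ∑ x, (μ x / nuF μ i x) * DF μ i P x y * C x y :=
          Finset.sum_congr rfl fun x _ => (hR x).symm
  have hbound : ∀ x, ∑ y, (μ x / nuF μ i x) * DF μ i P x y * C x y ≤ μ x := by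
    intro x
    by_cases hν : nuF μ i x = 0
    · have hμx : μ x = 0 := hνz x hν
      simp [hν, hμx]
    · have hνpos : 0 < nuF μ i x := lt_of_le_of_ne (hν0 x) (Ne.symm hν)
      have h1 : ∀ (y : ∀ j, 𝒴 j), (μ x / nuF μ i x) * DF μ i P x y * C x y
          ≤ (μ x / nuF μ i x) * ((∏ j, DF μ i (Q j) x (y j)) * nuF μ i x / nuF μ i x ^ k) := by
        intro y
        by_cases hdp : DF μ i P x y = 0
        · rw [hdp, mul_zero, zero_mul]
          exact mul_nonneg (div_nonneg (hμ0 x) (hν0 x))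
            (div_nonneg (mul_nonneg (Finset.prod_nonneg fun j _ =>
              DF_nonneg μ i (Q j) hμ0 (hQ0 j) x (y j)) (hν0 x)) (pow_nonneg (hν0 x) k))
        · refine le_of_eq ?_
          simp only [hCdef]
          field_simp
      calc ∑ y : ∀ j, 𝒴 j, (μ x / nuF μ i x) * DF μ i P x y * C x y
          ≤ ∑ y : ∀ j, 𝒴 j, (μ x / nuF μ i x) *
              ((∏ j, DF μ i (Q j) x (y j)) * nuF μ i x / nuF μ i x ^ k) :=
            Finset.sum_le_sum fun y _ => h1 y
        _ = (μ x / nuF μ i x) * (nuF μ i x / nuF μ i x ^ k) *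
              ∑ y : ∀ j, 𝒴 j, ∏ j, DF μ i (Q j) x (y j) := by
            rw [Finset.mul_sum]
            exact Finset.sum_congr rfl fun y _ => by ring
        _ = (μ x / nuF μ i x) * (nuF μ i x / nuF μ i x ^ k) * nuF μ i x ^ k := by
            rw [hsum_prodD x]
        _ = μ x := by field_simp
  have hS : ∑ x, ∑ y, μ x * P x y * C x y ≤ 1 := by
    calc ∑ x, ∑ y, μ x * P x y * C x y
        = ∑ y, ∑ x, μ x * P x y * C x y := Finset.sum_comm
      _ = ∑ y, ∑ x, (μ x / nuF μ i x) * DF μ i P x y * C x y :=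
          Finset.sum_congr rfl fun y _ => hcol y
      _ = ∑ x, ∑ y, (μ x / nuF μ i x) * DF μ i P x y * C x y := Finset.sum_comm
      _ ≤ ∑ x, μ x := Finset.sum_le_sum fun x _ => hbound x
      _ = 1 := hμ1
  -- Assemble
  rw [condMI_eq μ P i]
  have step1 : ∑ x, ∑ y, μ x * P x y * log (P x y * nuF μ i x / DF μ i P x y)
      ≤ (∑ x, ∑ y, μ x * P x y *
          (∑ j, log (Q j x (y j) * nuF μ i x / DF μ i (Q j) x (y j))))
        + ((∑ x, ∑ y, μ x * P x y * C x y) - ∑ x, ∑ y, μ x * P x y) := by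
    calc ∑ x, ∑ y, μ x * P x y * log (P x y * nuF μ i x / DF μ i P x y)
        ≤ ∑ x, ∑ y, (μ x * P x y *
            (∑ j, log (Q j x (y j) * nuF μ i x / DF μ i (Q j) x (y j)))
            + (μ x * P x y * C x y - μ x * P x y)) :=
          Finset.sum_le_sum fun x _ => Finset.sum_le_sum fun y _ => hA x y
      _ = _ := by
          rw [← Finset.sum_sub_distrib, ← Finset.sum_add_distrib]
          exact Finset.sum_congr rfl fun x _ => by
            rw [← Finset.sum_sub_distrib, ← Finset.sum_add_distrib]
  have hfinal := step1
  rw [hB, hT] at hfinal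
  have : ∑ x, ∑ y, μ x * P x y * log ((P x y * nuF μ i x) / DF μ i P x y)
      ≤ ∑ j, condMI μ (Q j) i := by
    calc _ ≤ (∑ j, condMI μ (Q j) i) + ((∑ x, ∑ y, μ x * P x y * C x y) - 1) := hfinal
      _ ≤ (∑ j, condMI μ (Q j) i) + (1 - 1) := by linarith [hS]
      _ = ∑ j, condMI μ (Q j) i := by ring
  exact this

/-- Composition of `ε`-MI-DP mechanisms: if mechanisms `M_j = P_{Y_j|Xⁿ}`
individually satisfy `ε_j`-MI-DP and the outputs `Y₁, …, Y_k` are conditionally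
independent given `Xⁿ` (the joint kernel factorizes as a product), then the combined
mechanism `P_{Y₁,…,Y_k|Xⁿ}` satisfies `(∑_j ε_j)`-MI-DP. -/
theorem mi_dp_composition {n k : ℕ} {𝒳 : Fin n → Type*} [∀ i, Fintype (𝒳 i)]
    {𝒴 : Fin k → Type*} [∀ j, Fintype (𝒴 j)]
    (Q : ∀ j : Fin k, (∀ i, 𝒳 i) → 𝒴 j → ℝ) (ε : Fin k → ℝ)
    (hQ0 : ∀ j x y, 0 ≤ Q j x y) (hQ1 : ∀ j x, ∑ y, Q j x y = 1)
    (hMIDP : ∀ j : Fin k, ∀ (μ : (∀ i, 𝒳 i) → ℝ),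
      (∀ x, 0 ≤ μ x) → (∑ x, μ x = 1) → ∀ i, condMI μ (Q j) i ≤ ε j) :
    ∀ (μ : (∀ i, 𝒳 i) → ℝ), (∀ x, 0 ≤ μ x) → (∑ x, μ x = 1) →
      ∀ i, condMI μ (fun x (y : ∀ j, 𝒴 j) => ∏ j, Q j x (y j)) i ≤ ∑ j, ε j := by
  intro μ hμ0 hμ1 i
  calc condMI μ (fun x (y : ∀ j, 𝒴 j) => ∏ j, Q j x (y j)) i
      ≤ ∑ j, condMI μ (Q j) i := condMI_prod_le Q hQ0 hQ1 μ hμ0 hμ1 i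
    _ ≤ ∑ j, ε j := Finset.sum_le_sum fun j _ => hMIDP j μ hμ0 hμ1 i
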